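/- Let a ∈ ℂ and 0 < r₁ < r₂. Then Ω(A(a,r₁,r₂)) is an open, connected, unbounded subset of ℂ² \ Σ, and the intersection of the closure of Ω(A(a,r₁,r₂)) with Σ equals {(z, conj(z)) : z ∈ A(a,r₁,r₂)}. -/

import Mathlib

open Complex Metric ComplexConjugate

/-- The variety `Λ_{a,ρ} = {(z,w) : (z−a)(w−conj a) = ρ², 0 < |z−a| < ρ}`. -/
def Lam (a : ℂ) (ρ : ℝ) : Set (ℂ × ℂ) :=
  {p | (p.1 - a) * (p.2 - conj a) = (ρ : ℂ) ^ 2 ∧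
        0 < ‖p.1 - a‖ ∧ ‖p.1 - a‖ < ρ}

/-- The closed annulus `A(a,r₁,r₂) = {z : r₁ ≤ |z−a| ≤ r₂}`. -/
def Ann (a : ℂ) (r₁ r₂ : ℝ) : Set ℂ :=
  {z | r₁ ≤ ‖z - a‖ ∧ ‖z - a‖ ≤ r₂}

/-- `Ω(A(a,r₁,r₂))`: the union of all `Λ_{b,ρ}` with `bΔ(b,ρ) ⊆ Int A(a,r₁,r₂)`
surrounding `a`. -/
def OmegaA (a : ℂ) (r₁ r₂ : ℝ) : Set (ℂ × ℂ) :=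
  {p | ∃ (b : ℂ) (ρ : ℝ), 0 < ρ ∧ sphere b ρ ⊆ interior (Ann a r₁ r₂) ∧
        ‖b - a‖ < ρ ∧ p ∈ Lam b ρ}

/-- The totally real plane `Σ = {(z, conj z) : z ∈ ℂ}`. -/
def Sig : Set (ℂ × ℂ) := {p | p.2 = conj p.1}

-- interior of the annulus
lemma interior_Ann (a : ℂ) (r₁ r₂ : ℝ) (h1 : 0 < r₁) :
    interior (Ann a r₁ r₂) = {z | r₁ < ‖z - a‖ ∧ ‖z - a‖ < r₂} := by
  apply subset_antisymm
  · intro z hz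
    have hzA : z ∈ Ann a r₁ r₂ := interior_subset hz
    obtain ⟨ε, hε, hball⟩ := Metric.isOpen_iff.1 isOpen_interior z hz
    have hball' : ball z ε ⊆ Ann a r₁ r₂ := hball.trans interior_subset
    have hza : ‖z - a‖ ≠ 0 := by
      have := hzA.1; intro h; rw [h] at this; linarith
    have hzapos : 0 < ‖z - a‖ := lt_of_le_of_ne (norm_nonneg _) (Ne.symm hza)
    set u : ℂ := (z - a) / (‖z - a‖ : ℂ) with hu
    have habs_u : ‖u‖ = 1 := by
      rw [hu, norm_div, Complex.norm_real, Real.norm_eq_abs, abs_of_pos hzapos, div_self hza]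
    set δ := min (ε / 2) (‖z - a‖ / 2) with hδ
    have hδpos : 0 < δ := lt_min (by linarith) (by linarith)
    have hδε : δ < ε := lt_of_le_of_lt (min_le_left _ _) (by linarith)
    have hδz : δ < ‖z - a‖ := lt_of_le_of_lt (min_le_right _ _) (by linarith)
    have hzu : (z - a) = ((‖z - a‖ : ℝ) : ℂ) * u := by
      rw [hu, mul_comm, div_mul_cancel₀ _ (by exact_mod_cast hza : ((‖z-a‖:ℝ):ℂ) ≠ 0)]
    have key : ∀ t : ℝ, (z + (t : ℂ) * u) - a = ((‖z - a‖ + t : ℝ) : ℂ) * u := by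
      intro t; push_cast; linear_combination hzu
    have hdist : ∀ t : ℝ, dist (z + (t : ℂ) * u) z = |t| := by
      intro t
      rw [Complex.dist_eq, add_sub_cancel_left, norm_mul, Complex.norm_real, Real.norm_eq_abs, habs_u, mul_one]
    have mem1 : z + (δ : ℂ) * u ∈ ball z ε := by
      rw [mem_ball, hdist, abs_of_pos hδpos]; linarith
    have mem2 : z + ((-δ : ℝ) : ℂ) * u ∈ ball z ε := by
      rw [mem_ball, hdist, abs_of_neg (by linarith : -δ < 0)]; linarith
    have h2 := (hball' mem1).2
    have h3 := (hball' mem2).1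
    rw [key δ, norm_mul, Complex.norm_real, Real.norm_eq_abs, habs_u, mul_one,
      abs_of_pos (by linarith : (0:ℝ) < ‖z - a‖ + δ)] at h2
    rw [key (-δ), norm_mul, Complex.norm_real, Real.norm_eq_abs, habs_u, mul_one,
      abs_of_pos (by linarith : (0:ℝ) < ‖z - a‖ + -δ)] at h3
    exact ⟨by linarith, by linarith⟩
  · apply interior_maximal
    · intro z hz; exact ⟨hz.1.le, hz.2.le⟩
    · have : {z : ℂ | r₁ < ‖z - a‖ ∧ ‖z - a‖ < r₂} =
        (fun z => ‖z - a‖) ⁻¹' (Set.Ioo r₁ r₂) := rfl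
      rw [this]
      exact (continuous_norm.comp (continuous_id.sub continuous_const)).isOpen_preimage
        _ isOpen_Ioo

-- sphere inclusion characterization
lemma sphere_char (a : ℂ) (r₁ r₂ : ℝ) (h1 : 0 < r₁) (b : ℂ) (ρ : ℝ) (hρ : 0 < ρ)
    (hba : ‖b - a‖ < ρ) :
    sphere b ρ ⊆ interior (Ann a r₁ r₂) ↔
      r₁ + ‖b - a‖ < ρ ∧ ρ + ‖b - a‖ < r₂ := by
  rw [interior_Ann a r₁ r₂ h1]
  constructor
  · intro hsub
    set u : ℂ := if b = a then 1 else (b - a) / (‖b - a‖ : ℂ) with hu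
    have habs_u : ‖u‖ = 1 := by
      rw [hu]; split_ifs with h
      · simp
      · have : ‖b - a‖ ≠ 0 := by
          simp [sub_eq_zero, h]
        rw [norm_div, Complex.norm_real, Real.norm_eq_abs, _root_.abs_of_nonneg (norm_nonneg _),
          div_self this]
    have hbu : b - a = ((‖b - a‖ : ℝ) : ℂ) * u := by
      rw [hu]; split_ifs with h
      · simp [h]
      · have h0 : ‖b - a‖ ≠ 0 := by simp [sub_eq_zero, h]
        rw [mul_comm, div_mul_cancel₀ _ (by exact_mod_cast h0 : ((‖b-a‖:ℝ):ℂ) ≠ 0)]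
    have hdist : ∀ t : ℝ, dist (b + (t : ℂ) * u) b = |t| := by
      intro t
      rw [Complex.dist_eq, add_sub_cancel_left, norm_mul, Complex.norm_real, Real.norm_eq_abs, habs_u, mul_one]
    have mem1 : b + (ρ : ℂ) * u ∈ sphere b ρ := by
      rw [mem_sphere, hdist, abs_of_pos hρ]
    have mem2 : b + ((-ρ : ℝ) : ℂ) * u ∈ sphere b ρ := by
      rw [mem_sphere, hdist, abs_of_neg (by linarith : -ρ < 0), neg_neg]
    have e1 : (b + (ρ : ℂ) * u) - a = ((‖b - a‖ + ρ : ℝ) : ℂ) * u := by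
      push_cast; linear_combination hbu
    have e2 : (b + ((-ρ : ℝ) : ℂ) * u) - a = ((‖b - a‖ - ρ : ℝ) : ℂ) * u := by
      push_cast; linear_combination hbu
    have h2 := (hsub mem1).2
    have h3 := (hsub mem2).1
    rw [e1, norm_mul, Complex.norm_real, Real.norm_eq_abs, habs_u, mul_one,
      abs_of_pos (by positivity : (0:ℝ) < ‖b - a‖ + ρ)] at h2
    rw [e2, norm_mul, Complex.norm_real, Real.norm_eq_abs, habs_u, mul_one,
      abs_of_neg (by linarith : ‖b - a‖ - ρ < 0)] at h3
    exact ⟨by linarith, by linarith⟩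
  · rintro ⟨hA, hB⟩ x hx
    rw [mem_sphere_iff_norm] at hx
    have hxb : ‖x - b‖ = ρ := by exact hx
    have t1 : ‖x - a‖ ≤ ‖x - b‖ + ‖b - a‖ :=
      norm_sub_le_norm_sub_add_norm_sub x b a
    have t2 : ‖x - b‖ ≤ ‖x - a‖ + ‖b - a‖ := by
      have := norm_sub_le_norm_sub_add_norm_sub x a b
      have e : ‖a - b‖ = ‖b - a‖ := by
        rw [← norm_neg, neg_sub]
      linarith [this, e.le]
    constructor
    · rw [hxb] at t2; linarith
    · rw [hxb] at t1; linarith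

/-- Explicit characterization of `OmegaA` by open conditions. -/
lemma omega_eq_S (a : ℂ) (r₁ r₂ : ℝ) (h1 : 0 < r₁) :
    OmegaA a r₁ r₂ = {p : ℂ × ℂ | ∃ t : ℝ, 0 < t ∧
      (r₁ + ‖p.1 - (t:ℂ) * (conj p.2 - p.1) - a‖)^2
          < (‖conj p.2 - p.1‖)^2 * (t^2 + t) ∧
      (‖conj p.2 - p.1‖)^2 * (t^2 + t)
          < (r₂ - ‖p.1 - (t:ℂ) * (conj p.2 - p.1) - a‖)^2 ∧
      ‖p.1 - (t:ℂ) * (conj p.2 - p.1) - a‖ < r₂} := by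
  ext p
  constructor
  · rintro ⟨b, ρ, hρ, hsub, hba, heq, h0, hlt⟩
    obtain ⟨hA, hB⟩ := (sphere_char a r₁ r₂ h1 b ρ hρ hba).1 hsub
    set k := ‖p.1 - b‖ with hk_def
    have hk : k ≠ 0 := ne_of_gt h0
    have hzb : p.1 - b ≠ 0 := by
      intro h; rw [hk_def, h] at hk; simp at hk
    set c := ρ^2 / k^2 with hc_def
    have hc : 1 < c := by
      rw [hc_def]
      rw [lt_div_iff₀ (by positivity)]
      nlinarith
    have hc1 : c - 1 ≠ 0 := by intro h; nlinarith [sub_eq_zero.1 h]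
    have hconj : conj (p.1 - b) * (conj p.2 - b) = (ρ:ℂ)^2 := by
      have h := congrArg (starRingEnd ℂ) heq
      simpa [map_mul, map_sub, map_pow, Complex.conj_conj, Complex.conj_ofReal] using h
    have hcb : conj p.2 - b = ((c:ℝ):ℂ) * (p.1 - b) := by
      have hczb : conj (p.1 - b) ≠ 0 := star_ne_zero.2 hzb
      apply mul_left_cancel₀ hczb
      rw [hconj]
      have : conj (p.1 - b) * (((c:ℝ):ℂ) * (p.1 - b)) =
          ((c:ℝ):ℂ) * ((p.1 - b) * conj (p.1 - b)) := by ring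
      rw [this, Complex.mul_conj, Complex.normSq_eq_norm_sq, ← hk_def]
      norm_cast
      rw [hc_def, div_mul_cancel₀ _ (pow_ne_zero 2 hk)]
    have hd : conj p.2 - p.1 = ((c - 1 : ℝ):ℂ) * (p.1 - b) := by
      push_cast
      linear_combination hcb
    have habs_d : ‖conj p.2 - p.1‖ = (c - 1) * k := by
      rw [hd, norm_mul, Complex.norm_real, Real.norm_eq_abs, abs_of_pos (by linarith : (0:ℝ) < c - 1), hk_def]
    refine ⟨1/(c-1), one_div_pos.2 (by linarith), ?_⟩
    have hcc : ((c:ℝ):ℂ) - 1 ≠ 0 := by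
      intro h
      apply hc1
      have : ((c - 1 : ℝ):ℂ) = 0 := by push_cast; linear_combination h
      exact_mod_cast this
    have htcC : (((c:ℝ):ℂ) - 1)⁻¹ * (((c:ℝ):ℂ) - 1) = 1 := inv_mul_cancel₀ hcc
    have hb_eq : p.1 - ((1/(c-1) : ℝ):ℂ) * (conj p.2 - p.1) = b := by
      rw [hd]
      push_cast
      linear_combination (b - p.1) * htcC
    rw [hb_eq]
    have hval : (‖conj p.2 - p.1‖)^2 * ((1/(c-1))^2 + 1/(c-1)) = ρ^2 := by
      rw [habs_d]
      have hck : c * k^2 = ρ^2 := by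
        rw [hc_def, div_mul_cancel₀ _ (pow_ne_zero 2 hk)]
      have expand : ((c-1)*k)^2 * ((1/(c-1))^2 + 1/(c-1)) = c * k^2 := by
        field_simp
        ring
      rw [expand, hck]
    rw [hval]
    refine ⟨?_, ?_, by linarith⟩
    · exact pow_lt_pow_left₀ hA (by positivity) two_ne_zero
    · exact pow_lt_pow_left₀ (by linarith) hρ.le two_ne_zero
  · rintro ⟨t, ht, hI1, hI2, hI3⟩
    set d := conj p.2 - p.1 with hd_def
    set D := ‖d‖ with hD_def
    set X := ‖p.1 - (t:ℂ) * d - a‖ with hX_def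
    have hXpos : (0:ℝ) < (r₁ + X)^2 := by positivity
    have hDpos : 0 < D^2 * (t^2 + t) := lt_trans hXpos hI1
    set ρ := Real.sqrt (D^2 * (t^2 + t)) with hρ_def
    have hρ : 0 < ρ := Real.sqrt_pos.2 hDpos
    have hρ2 : ρ^2 = D^2 * (t^2 + t) := Real.sq_sqrt hDpos.le
    have hD : 0 < D := by
      by_contra hcon
      push_neg at hcon
      have h0 : D = 0 := le_antisymm hcon (hD_def ▸ norm_nonneg d)
      rw [h0] at hDpos
      nlinarith [hDpos]
    have ineq1 : r₁ + X < ρ := by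
      apply lt_of_pow_lt_pow_left₀ 2 hρ.le
      rw [hρ2]; exact hI1
    have ineq2 : ρ + X < r₂ := by
      have hX2 : X < r₂ := hI3
      have : ρ < r₂ - X := by
        apply lt_of_pow_lt_pow_left₀ 2 (by linarith)
        rw [hρ2]; exact hI2
      linarith
    have hX0 : 0 ≤ X := norm_nonneg _
    refine ⟨p.1 - (t:ℂ) * d, ρ, hρ, ?_, ?_, ?_, ?_, ?_⟩
    · apply (sphere_char a r₁ r₂ h1 _ ρ hρ (by linarith : ‖p.1 - (t:ℂ)*d - a‖ < ρ)).2
      exact ⟨ineq1, ineq2⟩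
    · show ‖p.1 - (t:ℂ)*d - a‖ < ρ
      linarith
    · show (p.1 - (p.1 - (t:ℂ)*d)) * (p.2 - conj (p.1 - (t:ℂ)*d)) = (ρ:ℂ)^2
      have h2 : p.2 - conj (p.1 - (t:ℂ)*d) = (1 + (t:ℂ)) * conj d := by
        rw [hd_def]
        simp only [map_sub, map_mul, Complex.conj_conj, Complex.conj_ofReal]
        ring
      have h3 : p.1 - (p.1 - (t:ℂ)*d) = (t:ℂ) * d := by ring
      rw [h2, h3]
      have h4 : ((t:ℂ) * d) * ((1 + (t:ℂ)) * conj d) =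
          ((t:ℂ) * (1 + (t:ℂ))) * (d * conj d) := by ring
      rw [h4, Complex.mul_conj, Complex.normSq_eq_norm_sq, ← hD_def]
      norm_cast
      rw [hρ2]
      ring
    · show 0 < ‖p.1 - (p.1 - (t:ℂ)*d)‖
      have h3 : p.1 - (p.1 - (t:ℂ)*d) = (t:ℂ) * d := by ring
      rw [h3, norm_mul, Complex.norm_real, Real.norm_eq_abs, abs_of_pos ht]
      positivity
    · show ‖p.1 - (p.1 - (t:ℂ)*d)‖ < ρ
      have h3 : p.1 - (p.1 - (t:ℂ)*d) = (t:ℂ) * d := by ring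
      rw [h3, norm_mul, Complex.norm_real, Real.norm_eq_abs, abs_of_pos ht]
      apply lt_of_pow_lt_pow_left₀ 2 hρ.le
      rw [hρ2]
      have : 0 < D^2 * t := by positivity
      nlinarith

lemma isOpen_omega (a : ℂ) (r₁ r₂ : ℝ) (h1 : 0 < r₁) : IsOpen (OmegaA a r₁ r₂) := by
  rw [omega_eq_S a r₁ r₂ h1]
  have : {p : ℂ × ℂ | ∃ t : ℝ, 0 < t ∧
      (r₁ + ‖p.1 - (t:ℂ) * (conj p.2 - p.1) - a‖)^2
          < (‖conj p.2 - p.1‖)^2 * (t^2 + t) ∧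
      (‖conj p.2 - p.1‖)^2 * (t^2 + t)
          < (r₂ - ‖p.1 - (t:ℂ) * (conj p.2 - p.1) - a‖)^2 ∧
      ‖p.1 - (t:ℂ) * (conj p.2 - p.1) - a‖ < r₂} =
      ⋃ t ∈ Set.Ioi (0:ℝ), ({p : ℂ × ℂ |
      (r₁ + ‖p.1 - (t:ℂ) * (conj p.2 - p.1) - a‖)^2
          < (‖conj p.2 - p.1‖)^2 * (t^2 + t)} ∩
      {p : ℂ × ℂ | (‖conj p.2 - p.1‖)^2 * (t^2 + t)
          < (r₂ - ‖p.1 - (t:ℂ) * (conj p.2 - p.1) - a‖)^2} ∩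
      {p : ℂ × ℂ | ‖p.1 - (t:ℂ) * (conj p.2 - p.1) - a‖ < r₂}) := by
    ext p
    simp only [Set.mem_setOf_eq, Set.mem_iUnion, Set.mem_inter_iff, Set.mem_Ioi, exists_prop]
    constructor
    · rintro ⟨t, ht, hA, hB, hC⟩; exact ⟨t, ht, ⟨hA, hB⟩, hC⟩
    · rintro ⟨t, ht, ⟨hA, hB⟩, hC⟩; exact ⟨t, ht, hA, hB, hC⟩
  rw [this]
  apply isOpen_biUnion
  intro t _
  have hc1 : Continuous fun p : ℂ × ℂ => p.1 - (t:ℂ) * (conj p.2 - p.1) - a := by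
    exact ((continuous_fst.sub (continuous_const.mul
      ((Complex.continuous_conj.comp continuous_snd).sub continuous_fst))).sub continuous_const)
  have hc2 : Continuous fun p : ℂ × ℂ => conj p.2 - p.1 :=
    (Complex.continuous_conj.comp continuous_snd).sub continuous_fst
  have habs1 : Continuous fun p : ℂ × ℂ =>
      ‖p.1 - (t:ℂ) * (conj p.2 - p.1) - a‖ := continuous_norm.comp hc1
  have habs2 : Continuous fun p : ℂ × ℂ => ‖conj p.2 - p.1‖ :=
    continuous_norm.comp hc2
  refine IsOpen.inter (IsOpen.inter ?_ ?_) ?_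
  · exact isOpen_lt (by continuity) (by continuity)
  · exact isOpen_lt (by continuity) (by continuity)
  · exact isOpen_lt habs1 continuous_const

lemma combo_lt {s t A A' B B' : ℝ} (hs : 0 ≤ s) (ht : 0 ≤ t) (hst : s + t = 1)
    (hA : A < A') (hB : B < B') : s*A + t*B < s*A' + t*B' := by
  rcases eq_or_lt_of_le hs with h | h
  · have ht1 : t = 1 := by linarith
    rw [← h, ht1]; simpa using hB
  · have e1 : s*A < s*A' := by nlinarith
    have e2 : t*B ≤ t*B' := by nlinarith
    linarith

lemma isConnected_omega (a : ℂ) (r₁ r₂ : ℝ) (h1 : 0 < r₁) (h12 : r₁ < r₂) :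
    IsConnected (OmegaA a r₁ r₂) := by
  classical
  set C : Set (ℂ × ℝ × ℝ) := {x | r₁ + ‖x.1 - a‖ < x.2.1 ∧
    x.2.1 + ‖x.1 - a‖ < r₂ ∧ 0 < x.2.2 ∧ x.2.2 < x.2.1} with hC_def
  set Φ : (ℂ × ℝ × ℝ) × ℝ → ℂ × ℂ := fun q =>
    (q.1.1 + ((q.1.2.2:ℝ):ℂ) * Complex.exp ((q.2:ℂ) * Complex.I),
     conj q.1.1 + (((q.1.2.1:ℝ):ℂ)^2 / ((q.1.2.2:ℝ):ℂ)) * Complex.exp (-((q.2:ℂ) * Complex.I)))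
    with hΦ_def
  -- convexity of the parameter set
  have hconv : Convex ℝ C := by
    intro x hx y hy s t hs ht hst
    obtain ⟨hx1, hx2, hx3, hx4⟩ := hx
    obtain ⟨hy1, hy2, hy3, hy4⟩ := hy
    have hcomb1 : (s • x + t • y).1 = s • x.1 + t • y.1 := rfl
    have hcomb21 : (s • x + t • y).2.1 = s * x.2.1 + t * y.2.1 := rfl
    have hcomb22 : (s • x + t • y).2.2 = s * x.2.2 + t * y.2.2 := rfl
    have hstC : ((s:ℝ):ℂ) + ((t:ℝ):ℂ) = 1 := by exact_mod_cast hst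
    have key : s • x.1 + t • y.1 - a = s • (x.1 - a) + t • (y.1 - a) := by
      simp only [Complex.real_smul]
      linear_combination a * hstC
    have habs : ‖s • x.1 + t • y.1 - a‖ ≤
        s * ‖x.1 - a‖ + t * ‖y.1 - a‖ := by
      rw [key]
      refine le_trans (norm_add_le _ _) ?_
      simp only [Complex.real_smul, norm_mul, Complex.norm_real, Real.norm_eq_abs,
        _root_.abs_of_nonneg hs, _root_.abs_of_nonneg ht, le_refl]
    refine ⟨?_, ?_, ?_, ?_⟩
    · rw [hcomb1, hcomb21]
      have hcl := combo_lt hs ht hst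
        (show r₁ + ‖x.1 - a‖ < x.2.1 from hx1)
        (show r₁ + ‖y.1 - a‖ < y.2.1 from hy1)
      have expand : s*(r₁ + ‖x.1 - a‖) + t*(r₁ + ‖y.1 - a‖) =
          r₁ + (s * ‖x.1 - a‖ + t * ‖y.1 - a‖) := by
        linear_combination r₁ * hst
      linarith
    · rw [hcomb1, hcomb21]
      have hcl := combo_lt hs ht hst
        (show x.2.1 + ‖x.1 - a‖ < r₂ from hx2)
        (show y.2.1 + ‖y.1 - a‖ < r₂ from hy2)
      have expand : s*(x.2.1 + ‖x.1 - a‖) + t*(y.2.1 + ‖y.1 - a‖) =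
          (s * x.2.1 + t * y.2.1) + (s * ‖x.1 - a‖ + t * ‖y.1 - a‖) := by
        ring
      have expand2 : s * r₂ + t * r₂ = r₂ := by linear_combination r₂ * hst
      linarith
    · rw [hcomb22]
      have hcl := combo_lt hs ht hst hx3 hy3
      simpa using hcl
    · rw [hcomb21, hcomb22]
      exact combo_lt hs ht hst hx4 hy4
  have hCne : C.Nonempty := by
    refine ⟨(a, (r₁+r₂)/2, (r₁+r₂)/4), ?_, ?_, ?_, ?_⟩ <;>
      simp only [sub_self, norm_zero] <;> linarith
  -- image description
  have himage : OmegaA a r₁ r₂ = Φ '' (C ×ˢ (Set.univ : Set ℝ)) := by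
    ext p
    constructor
    · rintro ⟨b, ρ, hρ, hsub, hba, heq, h0, hlt⟩
      obtain ⟨hA, hB⟩ := (sphere_char a r₁ r₂ h1 b ρ hρ hba).1 hsub
      set s := ‖p.1 - b‖ with hs_def
      set θ := Complex.arg (p.1 - b) with hθ_def
      have hzb : p.1 - b ≠ 0 := by
        intro h; rw [hs_def, h] at h0; simp at h0
      have hpolar : ((s:ℝ):ℂ) * Complex.exp ((θ:ℂ) * Complex.I) = p.1 - b :=
        Complex.norm_mul_exp_arg_mul_I (p.1 - b)
      refine ⟨((b, ρ, s), θ), ⟨⟨hA, hB, h0, hlt⟩, trivial⟩, ?_⟩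
      have hsne : ((s:ℝ):ℂ) ≠ 0 := by
        exact_mod_cast ne_of_gt h0
      have hfst : (Φ ((b, ρ, s), θ)).1 = p.1 := by
        show b + ((s:ℝ):ℂ) * Complex.exp ((θ:ℂ) * Complex.I) = p.1
        rw [hpolar]; ring
      have hw : p.2 - conj b = ((ρ:ℝ):ℂ)^2 / (p.1 - b) := by
        rw [eq_div_iff hzb]; linear_combination heq
      have hsnd : (Φ ((b, ρ, s), θ)).2 = p.2 := by
        show conj b + (((ρ:ℝ):ℂ)^2 / ((s:ℝ):ℂ)) * Complex.exp (-((θ:ℂ) * Complex.I)) = p.2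
        rw [Complex.exp_neg]
        have : (((ρ:ℝ):ℂ)^2 / ((s:ℝ):ℂ)) * (Complex.exp ((θ:ℂ) * Complex.I))⁻¹ =
            ((ρ:ℝ):ℂ)^2 / (((s:ℝ):ℂ) * Complex.exp ((θ:ℂ) * Complex.I)) := by
          ring
        rw [this, hpolar, ← hw]; ring
      exact Prod.ext hfst hsnd
    · rintro ⟨⟨⟨b, ρ, s⟩, θ⟩, ⟨⟨hA, hB, hs0, hsρ⟩, -⟩, rfl⟩
      have hρ : 0 < ρ := lt_trans hs0 hsρ
      have hba : ‖b - a‖ < ρ := by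
        have := norm_nonneg (b - a); linarith
      have hsne : ((s:ℝ):ℂ) ≠ 0 := by exact_mod_cast ne_of_gt hs0
      refine ⟨b, ρ, hρ, (sphere_char a r₁ r₂ h1 b ρ hρ hba).2 ⟨hA, hB⟩, hba, ?_, ?_, ?_⟩
      · show (b + ((s:ℝ):ℂ) * Complex.exp ((θ:ℂ) * Complex.I) - b) *
          (conj b + (((ρ:ℝ):ℂ)^2 / ((s:ℝ):ℂ)) * Complex.exp (-((θ:ℂ) * Complex.I)) - conj b) =
          ((ρ:ℝ):ℂ)^2
        have e1 : b + ((s:ℝ):ℂ) * Complex.exp ((θ:ℂ) * Complex.I) - b =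
            ((s:ℝ):ℂ) * Complex.exp ((θ:ℂ) * Complex.I) := by ring
        have e2 : conj b + (((ρ:ℝ):ℂ)^2 / ((s:ℝ):ℂ)) * Complex.exp (-((θ:ℂ) * Complex.I)) -
            conj b = (((ρ:ℝ):ℂ)^2 / ((s:ℝ):ℂ)) * Complex.exp (-((θ:ℂ) * Complex.I)) := by ring
        rw [e1, e2]
        have e3 : ((s:ℝ):ℂ) * Complex.exp ((θ:ℂ) * Complex.I) *
            ((((ρ:ℝ):ℂ)^2 / ((s:ℝ):ℂ)) * Complex.exp (-((θ:ℂ) * Complex.I))) =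
            (((s:ℝ):ℂ) / ((s:ℝ):ℂ)) * ((ρ:ℝ):ℂ)^2 *
            (Complex.exp ((θ:ℂ) * Complex.I) * Complex.exp (-((θ:ℂ) * Complex.I))) := by
          ring
        rw [e3, div_self hsne, ← Complex.exp_add, add_neg_cancel, Complex.exp_zero]
        ring
      · show 0 < ‖b + ((s:ℝ):ℂ) * Complex.exp ((θ:ℂ) * Complex.I) - b‖
        have e1 : b + ((s:ℝ):ℂ) * Complex.exp ((θ:ℂ) * Complex.I) - b =
            ((s:ℝ):ℂ) * Complex.exp ((θ:ℂ) * Complex.I) := by ring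
        rw [e1, norm_mul, Complex.norm_real, Real.norm_eq_abs, Complex.norm_exp_ofReal_mul_I,
          abs_of_pos hs0, mul_one]
        exact hs0
      · show ‖b + ((s:ℝ):ℂ) * Complex.exp ((θ:ℂ) * Complex.I) - b‖ < ρ
        have e1 : b + ((s:ℝ):ℂ) * Complex.exp ((θ:ℂ) * Complex.I) - b =
            ((s:ℝ):ℂ) * Complex.exp ((θ:ℂ) * Complex.I) := by ring
        rw [e1, norm_mul, Complex.norm_real, Real.norm_eq_abs, Complex.norm_exp_ofReal_mul_I,
          abs_of_pos hs0, mul_one]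
        exact hsρ
  -- continuity of Φ on the parameter set
  have c11 : Continuous fun q : (ℂ × ℝ × ℝ) × ℝ => q.1.1 := continuous_fst.comp continuous_fst
  have cρ : Continuous fun q : (ℂ × ℝ × ℝ) × ℝ => q.1.2.1 :=
    continuous_fst.comp (continuous_snd.comp continuous_fst)
  have cs : Continuous fun q : (ℂ × ℝ × ℝ) × ℝ => q.1.2.2 :=
    continuous_snd.comp (continuous_snd.comp continuous_fst)
  have cθ : Continuous fun q : (ℂ × ℝ × ℝ) × ℝ => q.2 := continuous_snd
  have cexp1 : Continuous fun q : (ℂ × ℝ × ℝ) × ℝ => Complex.exp ((q.2:ℂ) * Complex.I) :=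
    Complex.continuous_exp.comp ((Complex.continuous_ofReal.comp cθ).mul continuous_const)
  have cexp2 : Continuous fun q : (ℂ × ℝ × ℝ) × ℝ => Complex.exp (-((q.2:ℂ) * Complex.I)) :=
    Complex.continuous_exp.comp
      (((Complex.continuous_ofReal.comp cθ).mul continuous_const).neg)
  have hfcont : Continuous fun q : (ℂ × ℝ × ℝ) × ℝ =>
      q.1.1 + ((q.1.2.2:ℝ):ℂ) * Complex.exp ((q.2:ℂ) * Complex.I) :=
    c11.add ((Complex.continuous_ofReal.comp cs).mul cexp1)
  have hden : ∀ q ∈ C ×ˢ (Set.univ : Set ℝ), ((q.1.2.2:ℝ):ℂ) ≠ 0 := by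
    rintro q ⟨hqC, -⟩
    have := hqC.2.2.1
    exact_mod_cast ne_of_gt this
  have hgcont : ContinuousOn (fun q : (ℂ × ℝ × ℝ) × ℝ =>
      conj q.1.1 + (((q.1.2.1:ℝ):ℂ)^2 / ((q.1.2.2:ℝ):ℂ)) * Complex.exp (-((q.2:ℂ) * Complex.I)))
      (C ×ˢ (Set.univ : Set ℝ)) := by
    apply ContinuousOn.add
    · exact (Complex.continuous_conj.comp c11).continuousOn
    · apply ContinuousOn.mul
      · exact ContinuousOn.div
          (((Complex.continuous_ofReal.comp cρ).pow 2).continuousOn)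
          ((Complex.continuous_ofReal.comp cs).continuousOn) hden
      · exact cexp2.continuousOn
  have hΦcont : ContinuousOn Φ (C ×ˢ (Set.univ : Set ℝ)) := by
    rw [hΦ_def]
    exact ContinuousOn.prodMk hfcont.continuousOn hgcont
  have hCconn : IsConnected C := ⟨hCne, hconv.isPreconnected⟩
  have hprod : IsConnected (C ×ˢ (Set.univ : Set ℝ)) := hCconn.prod isConnected_univ
  rw [himage]
  exact hprod.image Φ hΦcont

lemma omega_subset_compl (a : ℂ) (r₁ r₂ : ℝ) : OmegaA a r₁ r₂ ⊆ Sigᶜ := by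
  rintro p ⟨b, ρ, hρ, hsub, hba, heq, h0, hlt⟩ hSig
  have hSig' : p.2 = conj p.1 := hSig
  rw [hSig'] at heq
  have e : conj p.1 - conj b = conj (p.1 - b) := by rw [map_sub]
  rw [e, Complex.mul_conj, Complex.normSq_eq_norm_sq] at heq
  have : ‖p.1 - b‖ ^ 2 = ρ ^ 2 := by exact_mod_cast heq
  nlinarith [norm_nonneg (p.1 - b)]

lemma omega_unbounded (a : ℂ) (r₁ r₂ : ℝ) (h1 : 0 < r₁) (h12 : r₁ < r₂) :
    ¬ Bornology.IsBounded (OmegaA a r₁ r₂) := by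
  intro hbd
  obtain ⟨R, hR⟩ := (isBounded_iff_forall_norm_le).1 hbd
  set m := (r₁ + r₂)/2 with hm_def
  have hm1 : r₁ < m := by rw [hm_def]; linarith
  have hm2 : m < r₂ := by rw [hm_def]; linarith
  have hm0 : 0 < m := by linarith
  set D := |R| + ‖a‖ + m + m with hD_def
  have hD0 : 0 < D := by
    have := abs_nonneg R; have := norm_nonneg a; rw [hD_def]; linarith
  set s := m^2 / D with hs_def
  have hs0 : 0 < s := by positivity
  have hsm : s < m := by
    rw [hs_def, div_lt_iff₀ hD0]
    have := abs_nonneg R; have := norm_nonneg a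
    nlinarith
  have hms : m^2 / s = D := by
    rw [hs_def]
    field_simp
  set p : ℂ × ℂ := (a + (s:ℂ), conj a + ((m^2/s : ℝ):ℂ)) with hp_def
  have hmem : p ∈ OmegaA a r₁ r₂ := by
    have haa : ‖a - a‖ < m := by simp [hm0]
    refine ⟨a, m, hm0, (sphere_char a r₁ r₂ h1 a m hm0 haa).2 ⟨?_, ?_⟩, haa, ?_, ?_, ?_⟩
    · simp [hm1]
    · simp [hm2]
    · show (a + (s:ℂ) - a) * (conj a + ((m^2/s : ℝ):ℂ) - conj a) = ((m:ℝ):ℂ)^2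
      have e1 : a + (s:ℂ) - a = (s:ℂ) := by ring
      have e2 : conj a + ((m^2/s : ℝ):ℂ) - conj a = ((m^2/s : ℝ):ℂ) := by ring
      rw [e1, e2]
      have hmm : s * (m^2/s) = m^2 := by field_simp
      calc ((s:ℝ):ℂ) * ((m^2/s : ℝ):ℂ) = ((s * (m^2/s) : ℝ):ℂ) := by push_cast; ring
        _ = ((m^2 : ℝ):ℂ) := by rw [hmm]
        _ = ((m:ℝ):ℂ)^2 := by push_cast; ring
    · show 0 < ‖a + (s:ℂ) - a‖
      have e1 : a + (s:ℂ) - a = (s:ℂ) := by ring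
      rw [e1, Complex.norm_real, Real.norm_eq_abs, abs_of_pos hs0]; exact hs0
    · show ‖a + (s:ℂ) - a‖ < m
      have e1 : a + (s:ℂ) - a = (s:ℂ) := by ring
      rw [e1, Complex.norm_real, Real.norm_eq_abs, abs_of_pos hs0]; exact hsm
  have hnorm := hR p hmem
  have h2 : ‖p.2‖ ≤ ‖p‖ := norm_snd_le p
  have h3 : ‖((m^2/s : ℝ):ℂ)‖ ≤ ‖p.2‖ + ‖conj a‖ := by
    have : ((m^2/s : ℝ):ℂ) = p.2 - conj a := by rw [hp_def]; ring
    rw [this]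
    exact norm_sub_le _ _
  have h4 : ‖((m^2/s : ℝ):ℂ)‖ = m^2/s := by
    rw [Complex.norm_real, Real.norm_eq_abs, abs_of_pos (by positivity)]
  have h5 : ‖conj a‖ = ‖a‖ := by
    rw [Complex.norm_conj]
  rw [h4, h5, hms] at h3
  have : R < D - ‖a‖ := by
    rw [hD_def]
    have := le_abs_self R
    linarith
  linarith

lemma closure_omega_subset (a : ℂ) (r₁ r₂ : ℝ) (h1 : 0 < r₁) :
    closure (OmegaA a r₁ r₂) ⊆
      {p : ℂ × ℂ | ‖p.1 - a‖ ≤ r₂ ∧ r₁ ≤ ‖conj p.2 - a‖} := by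
  apply closure_minimal
  · rintro p ⟨b, ρ, hρ, hsub, hba, heq, h0, hlt⟩
    obtain ⟨hA, hB⟩ := (sphere_char a r₁ r₂ h1 b ρ hρ hba).1 hsub
    have tri1 : ‖p.1 - a‖ ≤ ‖p.1 - b‖ + ‖b - a‖ :=
      norm_sub_le_norm_sub_add_norm_sub p.1 b a
    have habs2 : ‖p.1 - b‖ * ‖p.2 - conj b‖ = ρ^2 := by
      have := congrArg norm heq
      rwa [norm_mul, norm_pow, Complex.norm_real, Real.norm_eq_abs, abs_of_pos hρ] at this
    have hwb : ‖conj p.2 - b‖ = ‖p.2 - conj b‖ := by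
      have e : conj p.2 - b = conj (p.2 - conj b) := by
        rw [map_sub, Complex.conj_conj]
      rw [e, Complex.norm_conj]
    have hfar : ρ < ‖p.2 - conj b‖ := by nlinarith
    have tri2 : ‖conj p.2 - b‖ ≤
        ‖conj p.2 - a‖ + ‖a - b‖ :=
      norm_sub_le_norm_sub_add_norm_sub (conj p.2) a b
    have hab : ‖a - b‖ = ‖b - a‖ := by
      rw [← norm_neg, neg_sub]
    constructor
    · linarith
    · rw [hwb, hab] at tri2
      linarith
  · apply IsClosed.inter
    · exact isClosed_le (continuous_norm.comp
        (continuous_fst.sub continuous_const)) continuous_const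
    · exact isClosed_le continuous_const (continuous_norm.comp
        ((Complex.continuous_conj.comp continuous_snd).sub continuous_const))

lemma mem_closure_inner (a : ℂ) (r₁ r₂ : ℝ) (h1 : 0 < r₁) (z : ℂ)
    (hz1 : r₁ < ‖z - a‖) (hz2 : ‖z - a‖ < r₂) :
    (z, conj z) ∈ closure (OmegaA a r₁ r₂) := by
  set u := ‖z - a‖ with hu_def
  have hu0 : 0 < u := lt_trans h1 hz1
  have hz0 : z - a ≠ 0 := by
    intro h; rw [hu_def, h] at hu0; simp at hu0
  set ρ : ℕ → ℝ := fun n => u + (r₂ - u)/((n:ℝ)+2) with hρ_def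
  have hρu : ∀ n, u < ρ n := by
    intro n
    have : 0 < (r₂ - u)/((n:ℝ)+2) := div_pos (by linarith) (by positivity)
    simp only [hρ_def]; linarith
  have hρr2 : ∀ n, ρ n < r₂ := by
    intro n
    have h2n : (1:ℝ) < (n:ℝ) + 2 := by
      have := Nat.cast_nonneg (α := ℝ) n; linarith
    have : (r₂ - u)/((n:ℝ)+2) < r₂ - u := div_lt_self (by linarith) h2n
    simp only [hρ_def]; linarith
  set f : ℕ → ℂ × ℂ := fun n => (z, conj a + ((ρ n ^2 : ℝ):ℂ) / (z - a)) with hf_def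
  have hmem : ∀ n, f n ∈ OmegaA a r₁ r₂ := by
    intro n
    have hρn0 : 0 < ρ n := lt_trans hu0 (hρu n)
    have haa : ‖a - a‖ < ρ n := by simp [hρn0]
    refine ⟨a, ρ n, hρn0, (sphere_char a r₁ r₂ h1 a (ρ n) hρn0 haa).2 ⟨?_, ?_⟩, haa, ?_, ?_, ?_⟩
    · simp only [sub_self, norm_zero, add_zero]; linarith [hρu n]
    · simp only [sub_self, norm_zero, add_zero]; exact hρr2 n
    · show (z - a) * (conj a + ((ρ n ^2 : ℝ):ℂ) / (z - a) - conj a) = ((ρ n : ℝ):ℂ)^2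
      have e : conj a + ((ρ n ^2 : ℝ):ℂ) / (z - a) - conj a = ((ρ n ^2 : ℝ):ℂ) / (z - a) := by
        ring
      rw [e, mul_div_cancel₀ _ hz0]
      norm_cast
    · show 0 < ‖z - a‖; exact hu0
    · show ‖z - a‖ < ρ n; exact hρu n
  have htop : Filter.Tendsto (fun n : ℕ => (n:ℝ) + 2) Filter.atTop Filter.atTop :=
    Filter.tendsto_atTop_add_const_right _ 2 tendsto_natCast_atTop_atTop
  have hρ_tend : Filter.Tendsto ρ Filter.atTop (nhds u) := by
    have h0' : Filter.Tendsto (fun n : ℕ => (r₂ - u)/((n:ℝ)+2)) Filter.atTop (nhds 0) :=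
      Filter.Tendsto.div_atTop tendsto_const_nhds htop
    have := Filter.Tendsto.add (tendsto_const_nhds (x := u)) h0'
    simpa using this
  have hsnd : Filter.Tendsto (fun n => conj a + ((ρ n ^2 : ℝ):ℂ) / (z - a))
      Filter.atTop (nhds (conj z)) := by
    have h2 : Filter.Tendsto (fun n => ((ρ n ^2 : ℝ):ℂ)) Filter.atTop (nhds ((u^2 : ℝ):ℂ)) :=
      (Complex.continuous_ofReal.tendsto _).comp (hρ_tend.pow 2)
    have h3 := Filter.Tendsto.add (tendsto_const_nhds (x := conj a)) (h2.div_const (z - a))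
    have e : conj a + ((u^2 : ℝ):ℂ) / (z - a) = conj z := by
      have hc : ((u^2 : ℝ):ℂ) = (z - a) * conj (z - a) := by
        rw [Complex.mul_conj, Complex.normSq_eq_norm_sq, ← hu_def]
      rw [hc, mul_comm, mul_div_assoc, div_self hz0, mul_one, map_sub]
      ring
    rwa [e] at h3
  have htend : Filter.Tendsto f Filter.atTop (nhds (z, conj z)) :=
    Filter.Tendsto.prodMk_nhds tendsto_const_nhds hsnd
  exact mem_closure_of_tendsto htend (Filter.Eventually.of_forall hmem)

lemma mem_closure_full (a : ℂ) (r₁ r₂ : ℝ) (h1 : 0 < r₁) (h12 : r₁ < r₂) (z : ℂ)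
    (hz1 : r₁ ≤ ‖z - a‖) (hz2 : ‖z - a‖ ≤ r₂) :
    (z, conj z) ∈ closure (OmegaA a r₁ r₂) := by
  set u := ‖z - a‖ with hu_def
  have hu0 : 0 < u := lt_of_lt_of_le h1 hz1
  have hz0 : z - a ≠ 0 := by
    intro h; rw [hu_def, h] at hu0; simp at hu0
  set m := (r₁ + r₂)/2 with hm_def
  have hm1 : r₁ < m := by rw [hm_def]; linarith
  have hm2 : m < r₂ := by rw [hm_def]; linarith
  set sq : ℕ → ℝ := fun n => 1/((n:ℝ)+2) with hsq_def
  have hsq0 : ∀ n, 0 < sq n := by intro n; positivity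
  have hsq1 : ∀ n, sq n < 1 := by
    intro n
    rw [hsq_def]
    rw [div_lt_one (by positivity)]
    have := Nat.cast_nonneg (α := ℝ) n; linarith
  set c : ℕ → ℝ := fun n => ((1 - sq n)*u + (sq n)*m)/u with hc_def
  set g : ℕ → ℂ := fun n => a + ((c n : ℝ):ℂ) * (z - a) with hg_def
  have hval : ∀ n, ‖g n - a‖ = (1 - sq n)*u + (sq n)*m := by
    intro n
    have e : g n - a = ((c n : ℝ):ℂ) * (z - a) := by rw [hg_def]; ring
    have hcn : 0 ≤ c n := by
      have := hsq0 n; have := hsq1 n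
      apply div_nonneg _ hu0.le
      nlinarith
    rw [e, norm_mul, Complex.norm_real, Real.norm_eq_abs, _root_.abs_of_nonneg hcn, ← hu_def, hc_def]
    field_simp
  have hbound1 : ∀ n, r₁ < (1 - sq n)*u + (sq n)*m := by
    intro n; have := hsq0 n; have := hsq1 n; nlinarith
  have hbound2 : ∀ n, (1 - sq n)*u + (sq n)*m < r₂ := by
    intro n; have := hsq0 n; have := hsq1 n; nlinarith
  have hmem : ∀ n, (g n, conj (g n)) ∈ closure (OmegaA a r₁ r₂) := by
    intro n
    apply mem_closure_inner a r₁ r₂ h1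
    · rw [hval n]; exact hbound1 n
    · rw [hval n]; exact hbound2 n
  have htop : Filter.Tendsto (fun n : ℕ => (n:ℝ) + 2) Filter.atTop Filter.atTop :=
    Filter.tendsto_atTop_add_const_right _ 2 tendsto_natCast_atTop_atTop
  have hsq_tend : Filter.Tendsto sq Filter.atTop (nhds 0) := by
    have := Filter.Tendsto.div_atTop (tendsto_const_nhds (x := (1:ℝ))) htop
    simpa [hsq_def] using this
  have hc_tend : Filter.Tendsto c Filter.atTop (nhds 1) := by
    have h2 : Filter.Tendsto (fun n => ((1 - sq n)*u + (sq n)*m)) Filter.atTop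
        (nhds ((1 - 0)*u + 0*m)) :=
      (((tendsto_const_nhds).sub hsq_tend).mul tendsto_const_nhds).add
        (hsq_tend.mul tendsto_const_nhds)
    have h3 := h2.div_const u
    have e : ((1 - 0)*u + 0*m)/u = 1 := by field_simp; ring
    rwa [e] at h3
  have hg_tend : Filter.Tendsto g Filter.atTop (nhds z) := by
    have h2 : Filter.Tendsto (fun n => ((c n : ℝ):ℂ)) Filter.atTop (nhds ((1:ℝ):ℂ)) :=
      (Complex.continuous_ofReal.tendsto _).comp hc_tend
    have h3 := Filter.Tendsto.add (tendsto_const_nhds (x := a)) (h2.mul_const (z - a))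
    have e : a + ((1:ℝ):ℂ) * (z - a) = z := by push_cast; ring
    rwa [e] at h3
  have htend : Filter.Tendsto (fun n => (g n, conj (g n))) Filter.atTop
      (nhds (z, conj z)) :=
    Filter.Tendsto.prodMk_nhds hg_tend ((Complex.continuous_conj.tendsto z).comp hg_tend)
  exact isClosed_closure.mem_of_tendsto htend (Filter.Eventually.of_forall hmem)


theorem stmt6 (a : ℂ) (r₁ r₂ : ℝ) (h1 : 0 < r₁) (h12 : r₁ < r₂) :
    IsOpen (OmegaA a r₁ r₂) ∧
    IsConnected (OmegaA a r₁ r₂) ∧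
    ¬ Bornology.IsBounded (OmegaA a r₁ r₂) ∧
    OmegaA a r₁ r₂ ⊆ Sigᶜ ∧
    closure (OmegaA a r₁ r₂) ∩ Sig =
      {p : ℂ × ℂ | p.2 = conj p.1 ∧ p.1 ∈ Ann a r₁ r₂} := by
  refine ⟨isOpen_omega a r₁ r₂ h1, isConnected_omega a r₁ r₂ h1 h12,
    omega_unbounded a r₁ r₂ h1 h12, omega_subset_compl a r₁ r₂, ?_⟩
  ext p
  constructor
  · rintro ⟨hcl, hSig⟩
    have hSig' : p.2 = conj p.1 := hSig
    obtain ⟨hb2, hb1⟩ := closure_omega_subset a r₁ r₂ h1 hcl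
    rw [hSig', Complex.conj_conj] at hb1
    exact ⟨hSig', hb1, hb2⟩
  · rintro ⟨hSig, hz1, hz2⟩
    have hp : p = (p.1, conj p.1) := Prod.ext rfl hSig
    rw [hp]
    exact ⟨mem_closure_full a r₁ r₂ h1 h12 p.1 hz1 hz2, rfl⟩
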